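/- Let $U \subseteq \mathbb{R}^N$ be open, $(\eta^{ij})$ a symmetric invertible real matrix with inverse $(\eta_{ij})$, $\varepsilon_\alpha \in \mathbb{R}$, $F^i, \psi^\alpha : U \to \mathbb{R}$ be $C^2$ functions, and let $u : \mathbb{R} \to U$ be a $C^1$ curve. Then for every $i$ and every $x \in \mathbb{R}$: $\left( \eta^{is} \frac{\partial F^j}{\partial u^s} \eta_{jk} + \frac{\partial F^i}{\partial u^k} + \eta^{is} \frac{\partial^2 F^j}{\partial u^s \partial u^k} \eta_{jr} u^r - \eta^{is} \sum_\alpha \varepsilon_\alpha \frac{\partial \psi^\alpha}{\partial u^s} \frac{\partial \psi^\alpha}{\partial u^k} - \eta^{is} \sum_\alpha \varepsilon_\alpha \frac{\partial^2 \psi^\alpha}{\partial u^s \partial u^k} \psi^\alpha \right)\!\Big|_{u(x)} \frac{du^k}{dx} = \frac{d}{dx}\left( F^i(u(x)) + \eta^{is} \eta_{jr} \frac{\partial F^j}{\partial u^s}(u(x))\, u^r(x) - \eta^{is} \sum_\alpha \varepsilon_\alpha \frac{\partial \psi^\alpha}{\partial u^s}(u(x))\, \psi^\alpha(u(x)) \right)$.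 -/

import Mathlib

noncomputable def pd {N : ℕ} (f : (Fin N → ℝ) → ℝ) (k : Fin N) (x : Fin N → ℝ) : ℝ :=
  fderiv ℝ f x (Pi.single k 1)

lemma chain_hasDerivAt {N : ℕ} {f : (Fin N → ℝ) → ℝ} {u : ℝ → Fin N → ℝ} {x : ℝ}
    (hf : DifferentiableAt ℝ f (u x)) (hu : DifferentiableAt ℝ u x) :
    HasDerivAt (fun t => f (u t))
      (∑ k, pd f k (u x) * deriv (fun t => u t k) x) x := by
  have h1 : HasDerivAt (fun t => f (u t)) (fderiv ℝ f (u x) (deriv u x)) x :=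
    hf.hasFDerivAt.comp_hasDerivAt x hu.hasDerivAt
  convert h1 using 1
  have hk : ∀ k, deriv (fun t => u t k) x = deriv u x k := fun k =>
    ((hasDerivAt_pi.mp hu.hasDerivAt) k).deriv
  have hvec : deriv u x = ∑ k, deriv u x k • (Pi.single k 1 : Fin N → ℝ) := by
    have := pi_eq_sum_univ (deriv u x)
    convert this using 2 with k
    ext j
    simp [Pi.single_apply, eq_comm]
  rw [hvec, map_sum]
  simp [pd, hk, mul_comm]

lemma pd_diffAt {N : ℕ} {f : (Fin N → ℝ) → ℝ} {p : Fin N → ℝ} (s : Fin N)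
    (hf : ContDiffAt ℝ 2 f p) : DifferentiableAt ℝ (pd f s) p := by
  have h1 : ContDiffAt ℝ 1 (fderiv ℝ f) p := hf.fderiv_right (by norm_num)
  exact (h1.differentiableAt one_ne_zero).clm_apply (differentiableAt_const _)

lemma sum4_comm {A B C D : Type*} [Fintype A] [Fintype B] [Fintype C] [Fintype D]
    (f : A → B → C → D → ℝ) :
    ∑ k, ∑ s, ∑ j, ∑ r, f k s j r = ∑ s, ∑ j, ∑ r, ∑ k, f k s j r := by
  rw [Finset.sum_comm]
  exact Finset.sum_congr rfl fun s _ => by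
    rw [Finset.sum_comm]
    exact Finset.sum_congr rfl fun j _ => Finset.sum_comm

lemma sum3_comm {A B C : Type*} [Fintype A] [Fintype B] [Fintype C]
    (f : A → B → C → ℝ) :
    ∑ k, ∑ s, ∑ α, f k s α = ∑ s, ∑ α, ∑ k, f k s α := by
  rw [Finset.sum_comm]
  exact Finset.sum_congr rfl fun s _ => Finset.sum_comm

theorem stmt10 (N L : ℕ) (U : Set (Fin N → ℝ)) (hU : IsOpen U)
    (ηup ηlow : Matrix (Fin N) (Fin N) ℝ) (hsym : ηup.IsSymm) (hsym' : ηlow.IsSymm)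
    (hinv : ηup * ηlow = 1) (hinv' : ηlow * ηup = 1)
    (ε : Fin L → ℝ)
    (F : Fin N → (Fin N → ℝ) → ℝ) (ψ : Fin L → (Fin N → ℝ) → ℝ)
    (hF : ∀ i, ContDiffOn ℝ 2 (F i) U) (hψ : ∀ α, ContDiffOn ℝ 2 (ψ α) U)
    (u : ℝ → Fin N → ℝ) (hu : ContDiff ℝ 1 u) (hrange : ∀ x, u x ∈ U) :
    ∀ i, ∀ x : ℝ,
      (∑ k, ((∑ s, ∑ j, ηup i s * pd (F j) s (u x) * ηlow j k)
          + pd (F i) k (u x)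
          + (∑ s, ∑ j, ∑ r, ηup i s * pd (pd (F j) s) k (u x) * ηlow j r * u x r)
          - (∑ s, ηup i s * ∑ α, ε α * pd (ψ α) s (u x) * pd (ψ α) k (u x))
          - (∑ s, ηup i s * ∑ α, ε α * pd (pd (ψ α) s) k (u x) * ψ α (u x)))
        * deriv (fun t => u t k) x)
      = deriv (fun t => F i (u t)
          + (∑ s, ∑ j, ∑ r, ηup i s * ηlow j r * pd (F j) s (u t) * u t r)
          - ∑ s, ηup i s * ∑ α, ε α * pd (ψ α) s (u t) * ψ α (u t)) x := by
  intro i x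
  have hud : DifferentiableAt ℝ u x := (hu.differentiable one_ne_zero).differentiableAt
  have hmem : U ∈ nhds (u x) := hU.mem_nhds (hrange x)
  have hFi : ∀ j, ContDiffAt ℝ 2 (F j) (u x) := fun j => (hF j).contDiffAt hmem
  have hψa : ∀ α, ContDiffAt ℝ 2 (ψ α) (u x) := fun α => (hψ α).contDiffAt hmem
  set c : Fin N → ℝ := fun k => deriv (fun t => u t k) x with hc
  have hur : ∀ r, HasDerivAt (fun t => u t r) (c r) x := by
    intro r
    have h := (hasDerivAt_pi.mp hud.hasDerivAt) r
    have : c r = deriv u x r := h.deriv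
    rw [this]; exact h
  have hA : HasDerivAt (fun t => F i (u t)) (∑ k, pd (F i) k (u x) * c k) x :=
    chain_hasDerivAt ((hFi i).differentiableAt two_ne_zero) hud
  have hB : ∀ j s, HasDerivAt (fun t => pd (F j) s (u t))
      (∑ k, pd (pd (F j) s) k (u x) * c k) x := fun j s =>
    chain_hasDerivAt (pd_diffAt s (hFi j)) hud
  have hψA : ∀ α, HasDerivAt (fun t => ψ α (u t)) (∑ k, pd (ψ α) k (u x) * c k) x :=
    fun α => chain_hasDerivAt ((hψa α).differentiableAt two_ne_zero) hud
  have hψB : ∀ α s, HasDerivAt (fun t => pd (ψ α) s (u t))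
      (∑ k, pd (pd (ψ α) s) k (u x) * c k) x := fun α s =>
    chain_hasDerivAt (pd_diffAt s (hψa α)) hud
  have h2 : HasDerivAt (fun t => ∑ s, ∑ j, ∑ r, ηup i s * ηlow j r * pd (F j) s (u t) * u t r)
      (∑ s, ∑ j, ∑ r, ηup i s * ηlow j r *
        ((∑ k, pd (pd (F j) s) k (u x) * c k) * u x r + pd (F j) s (u x) * c r)) x := by
    apply HasDerivAt.fun_sum; intro s _
    apply HasDerivAt.fun_sum; intro j _
    apply HasDerivAt.fun_sum; intro r _
    have := ((hB j s).mul (hur r)).const_mul (ηup i s * ηlow j r)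
    simpa [mul_assoc] using this
  have h3 : HasDerivAt (fun t => ∑ s, ηup i s * ∑ α, ε α * pd (ψ α) s (u t) * ψ α (u t))
      (∑ s, ηup i s * ∑ α, ε α *
        ((∑ k, pd (pd (ψ α) s) k (u x) * c k) * ψ α (u x)
          + pd (ψ α) s (u x) * (∑ k, pd (ψ α) k (u x) * c k))) x := by
    apply HasDerivAt.fun_sum; intro s _
    have hinner : HasDerivAt (fun t => ∑ α, ε α * pd (ψ α) s (u t) * ψ α (u t))
        (∑ α, ε α * ((∑ k, pd (pd (ψ α) s) k (u x) * c k) * ψ α (u x)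
          + pd (ψ α) s (u x) * (∑ k, pd (ψ α) k (u x) * c k))) x := by
      apply HasDerivAt.fun_sum; intro α _
      have := ((hψB α s).mul (hψA α)).const_mul (ε α)
      simpa [mul_assoc] using this
    simpa using hinner.const_mul (ηup i s)
  have hTot := (hA.fun_add h2).fun_sub h3
  rw [hTot.deriv]
  have hRB : (∑ s, ∑ j, ∑ r, ηup i s * ηlow j r *
        ((∑ k, pd (pd (F j) s) k (u x) * c k) * u x r + pd (F j) s (u x) * c r))
      = (∑ k, (∑ s, ∑ j, ∑ r, ηup i s * pd (pd (F j) s) k (u x) * ηlow j r * u x r) * c k)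
        + (∑ k, (∑ s, ∑ j, ηup i s * pd (F j) s (u x) * ηlow j k) * c k) := by
    simp only [mul_add, Finset.sum_add_distrib, Finset.mul_sum, Finset.sum_mul]
    congr 1
    · conv_rhs => rw [sum4_comm]
      exact Finset.sum_congr rfl fun s _ => Finset.sum_congr rfl fun j _ =>
        Finset.sum_congr rfl fun r _ => Finset.sum_congr rfl fun k _ => by ring
    · conv_rhs => rw [sum3_comm]
      exact Finset.sum_congr rfl fun s _ => Finset.sum_congr rfl fun j _ =>
        Finset.sum_congr rfl fun r _ => by ring
  have hRC : (∑ s, ηup i s * ∑ α, ε α *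
        ((∑ k, pd (pd (ψ α) s) k (u x) * c k) * ψ α (u x)
          + pd (ψ α) s (u x) * (∑ k, pd (ψ α) k (u x) * c k)))
      = (∑ k, (∑ s, ηup i s * ∑ α, ε α * pd (pd (ψ α) s) k (u x) * ψ α (u x)) * c k)
        + (∑ k, (∑ s, ηup i s * ∑ α, ε α * pd (ψ α) s (u x) * pd (ψ α) k (u x)) * c k) := by
    simp only [mul_add, Finset.sum_add_distrib, Finset.mul_sum, Finset.sum_mul]
    congr 1
    · conv_rhs => rw [sum3_comm]
      exact Finset.sum_congr rfl fun s _ => Finset.sum_congr rfl fun α _ =>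
        Finset.sum_congr rfl fun k _ => by ring
    · conv_rhs => rw [sum3_comm]
      exact Finset.sum_congr rfl fun s _ => Finset.sum_congr rfl fun α _ =>
        Finset.sum_congr rfl fun k _ => by ring
  rw [hRB, hRC]
  simp only [add_mul, sub_mul, Finset.sum_add_distrib, Finset.sum_sub_distrib]
  ring
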